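/- For every integer d ≥ 2, the domination number of the undirected de Bruijn graph of dimension 3 over a d-letter alphabet satisfies γ(cDB(d,1,3)) = d · ⌈d/2⌉. -/

import Mathlib

/-- A sequence `x` of length `n` over the alphabet `Fin d` is `t`-constrained if
equal symbols occur at positions at distance at least `t`. -/
def dbConstrained (d t n : ℕ) (x : Fin n → Fin d) : Prop :=
  ∀ i j : Fin n, i < j → x i = x j → t ≤ (j : ℕ) - (i : ℕ)

/-- The vertex set `V(d,t,n)` of the `t`-constrained de Bruijn graph: all
`t`-constrained sequences of length `n` over a `d`-letter alphabet. -/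
abbrev dbVtx (d t n : ℕ) : Type := {x : Fin n → Fin d // dbConstrained d t n x}

/-- `dbShift x y` holds when there is a directed de Bruijn edge from `x` to `y`,
i.e. `y` is obtained from `x` by deleting its first symbol and appending a new
last symbol. -/
def dbShift {d t n : ℕ} (x y : dbVtx d t n) : Prop :=
  ∀ (i : Fin n) (h : (i : ℕ) + 1 < n), y.val i = x.val ⟨(i : ℕ) + 1, h⟩

/-- `S` is a dominating set of the directed `t`-constrained de Bruijn graph
`cDB⁺(d,t,n)`: every vertex is dominated by (equal to, or an out-neighbor of)
some element of `S`. -/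
def dbDirDominating {d t n : ℕ} (S : Set (dbVtx d t n)) : Prop :=
  ∀ v : dbVtx d t n, ∃ s ∈ S, s = v ∨ dbShift s v

/-- The domination number `γ(cDB⁺(d,t,n))` of the directed `t`-constrained
de Bruijn graph. -/
noncomputable def gammaDir (d t n : ℕ) : ℕ :=
  sInf {k | ∃ S : Set (dbVtx d t n), S.Finite ∧ S.ncard = k ∧ dbDirDominating S}

/-- Adjacency in the undirected `t`-constrained de Bruijn graph `cDB(d,t,n)`:
edge directions are ignored and loops are removed. -/
def dbAdj {d t n : ℕ} (x y : dbVtx d t n) : Prop :=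
  x ≠ y ∧ (dbShift x y ∨ dbShift y x)

/-- `S` is a dominating set of the undirected graph `cDB(d,t,n)`: every vertex
is dominated by (equal to, or adjacent to) some element of `S`. -/
def dbUndirDominating {d t n : ℕ} (S : Set (dbVtx d t n)) : Prop :=
  ∀ v : dbVtx d t n, ∃ s ∈ S, s = v ∨ dbAdj s v

/-- The domination number `γ(cDB(d,t,n))` of the undirected `t`-constrained
de Bruijn graph. -/
noncomputable def gammaUndir (d t n : ℕ) : ℕ :=
  sInf {k | ∃ S : Set (dbVtx d t n), S.Finite ∧ S.ncard = k ∧ dbUndirDominating S}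

set_option maxHeartbeats 1000000

open Finset

namespace DB3

variable {d : ℕ}

abbrev T (d : ℕ) := Fin d × Fin d × Fin d
def fibS (S : Finset (T d)) (b : Fin d) : Finset (T d) := S.filter (fun t => t.2.1 = b)
def Qs (S : Finset (T d)) (a : Fin d) : Finset (Fin d) := (fibS S a).image (fun t => t.2.2)
def Ps (S : Finset (T d)) (c : Fin d) : Finset (Fin d) := (fibS S c).image (fun t => t.1)
def uS (S : Finset (T d)) (b : Fin d) : ℕ := (univ.filter (fun a => b ∉ Qs S a)).card
def vS (S : Finset (T d)) (b : Fin d) : ℕ := (univ.filter (fun c => b ∉ Ps S c)).card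
def Dom (S : Finset (T d)) : Prop := ∀ a b c : Fin d, b ∈ Qs S a ∨ b ∈ Ps S c ∨ (a, b, c) ∈ S
noncomputable def slk (S : Finset (T d)) (b : Fin d) : ℤ :=
  2 * ((fibS S b).card : ℤ) + d - (Ps S b).card - (Qs S b).card - uS S b - vS S b
def rev (S : Finset (T d)) : Finset (T d) := S.image (fun t => (t.2.2, t.2.1, t.1))

lemma mem_Qs {S : Finset (T d)} {a z : Fin d} : z ∈ Qs S a ↔ ∃ x, (x, a, z) ∈ S := by
  simp only [Qs, fibS, mem_image, mem_filter]
  constructor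
  · rintro ⟨⟨x, y, w⟩, ⟨hS, hy⟩, hw⟩
    exact ⟨x, by simp at hy hw; rw [← hy, ← hw]; exact hS⟩
  · rintro ⟨x, hx⟩
    exact ⟨(x, a, z), ⟨hx, rfl⟩, rfl⟩

lemma mem_Ps {S : Finset (T d)} {c x : Fin d} : x ∈ Ps S c ↔ ∃ z, (x, c, z) ∈ S := by
  simp only [Ps, fibS, mem_image, mem_filter]
  constructor
  · rintro ⟨⟨x', y, w⟩, ⟨hS, hy⟩, hw⟩
    exact ⟨w, by simp at hy hw; rw [← hy, ← hw]; exact hS⟩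
  · rintro ⟨z, hz⟩
    exact ⟨(x, c, z), ⟨hz, rfl⟩, rfl⟩

lemma r_le_m (S : Finset (T d)) (b : Fin d) : (Ps S b).card ≤ (fibS S b).card :=
  card_image_le

lemma s_le_m (S : Finset (T d)) (b : Fin d) : (Qs S b).card ≤ (fibS S b).card :=
  card_image_le

lemma u_le_d (S : Finset (T d)) (b : Fin d) : uS S b ≤ d := by
  simpa [uS] using (card_filter_le (univ : Finset (Fin d)) _)

lemma v_le_d (S : Finset (T d)) (b : Fin d) : vS S b ≤ d := by
  simpa [vS] using (card_filter_le (univ : Finset (Fin d)) _)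

-- the forced-rectangle counting bound: u*v + r ≤ m + u
lemma rect_bound (S : Finset (T d)) (hDom : Dom S) (b : Fin d) :
    uS S b * vS S b + (Ps S b).card ≤ (fibS S b).card + uS S b := by
  classical
  set U := univ.filter (fun a => b ∉ Qs S a) with hU
  set V := univ.filter (fun c => b ∉ Ps S c) with hV
  set X := fibS S b with hX
  set A := X.filter (fun t => t.1 ∈ U) with hA
  set B := X.filter (fun t => t.1 ∉ U) with hB
  have hsplit : A.card + B.card = X.card := card_filter_add_card_filter_not _
  have hAcard : U.card * V.card ≤ A.card := by
    rw [← card_product]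
    apply card_le_card_of_injOn (fun p => (p.1, b, p.2))
    · rintro ⟨a, c⟩ hp
      rw [mem_coe, mem_product] at hp
      have ha : b ∉ Qs S a := (mem_filter.mp hp.1).2
      have hc : b ∉ Ps S c := (mem_filter.mp hp.2).2
      have := hDom a b c
      rcases this with h | h | h
      · exact absurd h ha
      · exact absurd h hc
      · rw [hA, hX, mem_coe]
        refine mem_filter.mpr ⟨mem_filter.mpr ⟨h, rfl⟩, ?_⟩
        exact hp.1
    · rintro ⟨a, c⟩ _ ⟨a', c'⟩ _ h
      simpa [Prod.ext_iff] using h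
  have hBcard : (Ps S b).card ≤ B.card + U.card := by
    have hsub : Ps S b ⊆ B.image (fun t => t.1) ∪ U := by
      intro p hp
      by_cases hpU : p ∈ U
      · exact mem_union_right _ hpU
      · refine mem_union_left _ ?_
        obtain ⟨z, hz⟩ := mem_Ps.mp hp
        refine mem_image.mpr ⟨(p, b, z), ?_, rfl⟩
        rw [hB, hX]
        exact mem_filter.mpr ⟨mem_filter.mpr ⟨hz, rfl⟩, hpU⟩
    calc (Ps S b).card ≤ (B.image (fun t => t.1) ∪ U).card := card_le_card hsub
      _ ≤ (B.image (fun t => t.1)).card + U.card := card_union_le _ _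
      _ ≤ B.card + U.card := by gcongr; exact card_image_le
  calc uS S b * vS S b + (Ps S b).card ≤ A.card + (B.card + U.card) := by
        exact Nat.add_le_add hAcard hBcard
    _ = (A.card + B.card) + U.card := by ring
    _ = X.card + uS S b := by rw [hsplit]; rfl


lemma mem_rev {S : Finset (T d)} {a b c : Fin d} : (a, b, c) ∈ rev S ↔ (c, b, a) ∈ S := by
  constructor
  · intro h
    obtain ⟨⟨x, y, z⟩, hx, he⟩ := mem_image.mp h
    simp [Prod.ext_iff] at he
    obtain ⟨h1, h2, h3⟩ := he
    rw [← h1, ← h2, ← h3]; exact hx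
  · intro h
    exact mem_image.mpr ⟨(c, b, a), h, rfl⟩

lemma card_rev (S : Finset (T d)) : (rev S).card = S.card := by
  apply card_image_of_injective
  rintro ⟨a, b, c⟩ ⟨a', b', c'⟩ h
  simp [Prod.ext_iff] at h ⊢
  tauto

lemma Qs_rev (S : Finset (T d)) (a : Fin d) : Qs (rev S) a = Ps S a := by
  ext z
  rw [mem_Qs, mem_Ps]
  exact ⟨fun ⟨x, hx⟩ => ⟨x, mem_rev.mp hx⟩, fun ⟨x, hx⟩ => ⟨x, mem_rev.mpr hx⟩⟩

lemma Ps_rev (S : Finset (T d)) (c : Fin d) : Ps (rev S) c = Qs S c := by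
  ext z
  rw [mem_Qs, mem_Ps]
  exact ⟨fun ⟨x, hx⟩ => ⟨x, mem_rev.mp hx⟩, fun ⟨x, hx⟩ => ⟨x, mem_rev.mpr hx⟩⟩

lemma uS_rev (S : Finset (T d)) (b : Fin d) : uS (rev S) b = vS S b := by
  unfold uS vS; congr 1; apply filter_congr; intro a _; rw [Qs_rev]

lemma vS_rev (S : Finset (T d)) (b : Fin d) : vS (rev S) b = uS S b := by
  unfold uS vS; congr 1; apply filter_congr; intro a _; rw [Ps_rev]

lemma fib_rev_card (S : Finset (T d)) (b : Fin d) :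
    (fibS (rev S) b).card = (fibS S b).card := by
  apply card_nbij' (fun t => (t.2.2, t.2.1, t.1)) (fun t => (t.2.2, t.2.1, t.1))
  · rintro ⟨x, y, z⟩ ht
    rw [fibS, mem_coe, mem_filter] at ht ⊢
    exact ⟨mem_rev.mp (by simpa using ht.1), ht.2⟩
  · rintro ⟨x, y, z⟩ ht
    rw [fibS, mem_coe, mem_filter] at ht ⊢
    exact ⟨mem_rev.mpr (by simpa using ht.1), ht.2⟩
  · rintro ⟨x, y, z⟩ _; rfl
  · rintro ⟨x, y, z⟩ _; rfl

lemma Dom_rev {S : Finset (T d)} (hDom : Dom S) : Dom (rev S) := by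
  intro a b c
  rcases hDom c b a with h | h | h
  · right; left; rwa [Ps_rev]
  · left; rwa [Qs_rev]
  · right; right; exact mem_rev.mpr h


lemma sum_fib (S : Finset (T d)) : ∑ b : Fin d, (fibS S b).card = S.card := by
  rw [card_eq_sum_card_fiberwise (f := fun t : T d => t.2.1) (fun t _ => mem_univ _)]
  rfl

lemma sum_su (S : Finset (T d)) : ∑ a : Fin d, (Qs S a).card + ∑ b : Fin d, uS S b = d * d := by
  have h1 : ∀ a : Fin d, (Qs S a).card + (univ.filter (fun b => b ∉ Qs S a)).card = d := by
    intro a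
    have := card_filter_add_card_filter_not (s := (univ : Finset (Fin d)))
      (p := fun b => b ∈ Qs S a)
    rw [filter_univ_mem] at this
    simpa using this
  have h2 : ∑ b : Fin d, uS S b = ∑ a : Fin d, (univ.filter (fun b => b ∉ Qs S a)).card := by
    unfold uS
    simp only [card_filter]
    rw [Finset.sum_comm]
  rw [h2, ← Finset.sum_add_distrib]
  simp only [h1]
  simp [Finset.card_univ]

lemma sum_rv (S : Finset (T d)) : ∑ c : Fin d, (Ps S c).card + ∑ b : Fin d, vS S b = d * d := by
  have h1 : ∀ c : Fin d, (Ps S c).card + (univ.filter (fun b => b ∉ Ps S c)).card = d := by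
    intro c
    have := card_filter_add_card_filter_not (s := (univ : Finset (Fin d)))
      (p := fun b => b ∈ Ps S c)
    rw [filter_univ_mem] at this
    simpa using this
  have h2 : ∑ b : Fin d, vS S b = ∑ c : Fin d, (univ.filter (fun b => b ∉ Ps S c)).card := by
    unfold vS
    simp only [card_filter]
    rw [Finset.sum_comm]
  rw [h2, ← Finset.sum_add_distrib]
  simp only [h1]
  simp [Finset.card_univ]


lemma sum_slk (S : Finset (T d)) :
    ∑ b : Fin d, slk S b = 2 * (S.card : ℤ) - d * d := by
  unfold slk
  push_cast
  rw [Finset.sum_sub_distrib, Finset.sum_sub_distrib, Finset.sum_sub_distrib,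
    Finset.sum_sub_distrib, Finset.sum_add_distrib]
  have e1 : ∑ b : Fin d, 2 * ((fibS S b).card : ℤ) = 2 * (S.card : ℤ) := by
    rw [← Finset.mul_sum]
    congr 1
    rw [← Nat.cast_sum]
    exact_mod_cast sum_fib S
  have e2 : (∑ _b : Fin d, (d : ℤ)) = (d : ℤ) * d := by
    simp [Finset.card_univ, mul_comm]
  have e3 : (∑ b : Fin d, ((Ps S b).card : ℤ)) + ∑ b : Fin d, ((vS S b) : ℤ) = (d : ℤ) * d := by
    rw [← Nat.cast_sum, ← Nat.cast_sum]
    exact_mod_cast sum_rv S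
  have e4 : (∑ b : Fin d, ((Qs S b).card : ℤ)) + ∑ b : Fin d, ((uS S b) : ℤ) = (d : ℤ) * d := by
    rw [← Nat.cast_sum, ← Nat.cast_sum]
    exact_mod_cast sum_su S
  linarith [e1, e2, e3, e4]



lemma rect_bound' (S : Finset (T d)) (hDom : Dom S) (b : Fin d) :
    uS S b * vS S b + (Qs S b).card ≤ (fibS S b).card + vS S b := by
  have h := rect_bound (rev S) (Dom_rev hDom) b
  rw [uS_rev, vS_rev, Ps_rev, fib_rev_card] at h
  rwa [Nat.mul_comm] at h


lemma pure_slack (S : Finset (T d)) (b : Fin d) (h : uS S b = 0 ∨ vS S b = 0) :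
    |((Ps S b).card : ℤ) - (Qs S b).card| + ((d : ℤ) - uS S b - vS S b) ≤ slk S b := by
  have h1 : ((Ps S b).card : ℤ) ≤ (fibS S b).card := by exact_mod_cast r_le_m S b
  have h2 : ((Qs S b).card : ℤ) ≤ (fibS S b).card := by exact_mod_cast s_le_m S b
  have h3 : (uS S b : ℤ) ≤ d := by exact_mod_cast u_le_d S b
  have h4 : (vS S b : ℤ) ≤ d := by exact_mod_cast v_le_d S b
  have h5 : (uS S b : ℤ) = 0 ∨ (vS S b : ℤ) = 0 := by
    rcases h with h | h
    · left; rw [h]; rfl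
    · right; rw [h]; rfl
  unfold slk
  rcases le_total ((Ps S b).card : ℤ) ((Qs S b).card : ℤ) with hle | hle
  · rw [abs_of_nonpos (by linarith)]
    rcases h5 with h5 | h5 <;> linarith
  · rw [abs_of_nonneg (by linarith)]
    rcases h5 with h5 | h5 <;> linarith

lemma mixed_slack (S : Finset (T d)) (hDom : Dom S) (b : Fin d) :
    ((d : ℤ) - 2) + 2 * ((uS S b : ℤ) - 1) * ((vS S b : ℤ) - 1)
      + |(((Ps S b).card : ℤ) - (Qs S b).card) - ((uS S b : ℤ) - vS S b)| ≤ slk S b := by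
  have h1 : (uS S b : ℤ) * (vS S b : ℤ) + (Ps S b).card ≤ ((fibS S b).card : ℤ) + uS S b := by
    exact_mod_cast rect_bound S hDom b
  have h2 : (uS S b : ℤ) * (vS S b : ℤ) + (Qs S b).card ≤ ((fibS S b).card : ℤ) + vS S b := by
    exact_mod_cast rect_bound' S hDom b
  unfold slk
  rcases abs_cases ((((Ps S b).card : ℤ) - (Qs S b).card) - ((uS S b : ℤ) - vS S b)) with
    ⟨he, _⟩ | ⟨he, _⟩ <;> rw [he] <;> nlinarith [h1, h2]

lemma slk_nonneg (S : Finset (T d)) (hDom : Dom S) (hd : 2 ≤ d) (b : Fin d) :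
    0 ≤ slk S b := by
  by_cases h : uS S b = 0 ∨ vS S b = 0
  · have := pure_slack S b h
    have h3 := u_le_d S b
    have h4 := v_le_d S b
    have habs : (0:ℤ) ≤ |((Ps S b).card : ℤ) - (Qs S b).card| := abs_nonneg _
    have hu : (uS S b : ℤ) ≤ d := by exact_mod_cast h3
    have hv : (vS S b : ℤ) ≤ d := by exact_mod_cast h4
    rcases h with h | h
    · have h0 : (uS S b : ℤ) = 0 := by rw [h]; rfl
      linarith
    · have h0 : (vS S b : ℤ) = 0 := by rw [h]; rfl
      linarith
  · push_neg at h
    have hu : 1 ≤ uS S b := Nat.one_le_iff_ne_zero.mpr h.1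
    have hv : 1 ≤ vS S b := Nat.one_le_iff_ne_zero.mpr h.2
    have := mixed_slack S hDom b
    have hu' : (1:ℤ) ≤ uS S b := by exact_mod_cast hu
    have hv' : (1:ℤ) ≤ vS S b := by exact_mod_cast hv
    have hd' : (2:ℤ) ≤ d := by exact_mod_cast hd
    have habs : (0:ℤ) ≤ |(((Ps S b).card : ℤ) - (Qs S b).card) - ((uS S b : ℤ) - vS S b)| :=
      abs_nonneg _
    nlinarith

-- Part 5 : contradiction when all blocks are pure and d is odd
lemma odd_pure (S : Finset (T d)) (hDom : Dom S) (hd : 2 ≤ d) (hodd : d % 2 = 1)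
    (hpure : ∀ b : Fin d, uS S b = 0 ∨ vS S b = 0)
    (hsmall : ∑ b : Fin d, slk S b ≤ (d : ℤ) - 2) : False := by
  classical
  -- no block has u = v = 0
  have hno00 : ∀ b : Fin d, ¬(uS S b = 0 ∧ vS S b = 0) := by
    rintro b ⟨h1, h2⟩
    have hb := pure_slack S b (Or.inl h1)
    have hu0 : (uS S b : ℤ) = 0 := by rw [h1]; rfl
    have hv0 : (vS S b : ℤ) = 0 := by rw [h2]; rfl
    have habs : (0:ℤ) ≤ |((Ps S b).card : ℤ) - (Qs S b).card| := abs_nonneg _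
    have hle : slk S b ≤ ∑ b : Fin d, slk S b :=
      Finset.single_le_sum (fun i _ => slk_nonneg S hDom hd i) (mem_univ b)
    have : (d:ℤ) ≤ slk S b := by rw [hu0, hv0] at hb; linarith
    linarith
  -- abbreviations
  set R : Fin d → ℤ := fun b => ((Ps S b).card : ℤ) with hR
  set Q : Fin d → ℤ := fun b => ((Qs S b).card : ℤ) with hQ
  set U : Fin d → ℤ := fun b => (uS S b : ℤ) with hU
  set V : Fin d → ℤ := fun b => (vS S b : ℤ) with hV
  have hdelta : ∀ b, 0 ≤ (d:ℤ) - U b - V b := by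
    intro b
    have h3 : U b ≤ d := by simp only [hU]; exact_mod_cast u_le_d S b
    have h4 : V b ≤ d := by simp only [hV]; exact_mod_cast v_le_d S b
    rcases hpure b with h | h
    · have : U b = 0 := by simp [hU, h]
      linarith
    · have : V b = 0 := by simp [hV, h]
      linarith
  have hslack : ∑ b : Fin d, (|R b - Q b| + ((d:ℤ) - U b - V b)) ≤ (d:ℤ) - 2 := by
    calc ∑ b : Fin d, (|R b - Q b| + ((d:ℤ) - U b - V b))
        ≤ ∑ b : Fin d, slk S b := Finset.sum_le_sum (fun b _ => pure_slack S b (hpure b))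
      _ ≤ (d:ℤ) - 2 := hsmall
  -- W identity
  have hW : ∑ b : Fin d, (V b - U b) = ∑ b : Fin d, (Q b - R b) := by
    have e1 : ∑ b : Fin d, Q b + ∑ b : Fin d, U b = (d:ℤ) * d := by
      simp only [hQ, hU, ← Nat.cast_sum]
      exact_mod_cast sum_su S
    have e2 : ∑ b : Fin d, R b + ∑ b : Fin d, V b = (d:ℤ) * d := by
      simp only [hR, hV, ← Nat.cast_sum]
      exact_mod_cast sum_rv S
    rw [Finset.sum_sub_distrib, Finset.sum_sub_distrib]
    linarith
  -- split into Bp/Bm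
  have hsplit := Finset.sum_filter_add_sum_filter_not (univ : Finset (Fin d))
    (fun b => uS S b = 0) (fun b => V b - U b)
  set Bp := univ.filter (fun b => uS S b = 0) with hBp
  set Bm := univ.filter (fun b => ¬ uS S b = 0) with hBm
  have hcards : Bp.card + Bm.card = d := by
    rw [hBp, hBm, card_filter_add_card_filter_not, card_univ, Fintype.card_fin]
  -- on Bp : d = (V-U) + (d-U-V);  on Bm : d = -(V-U) + (d-U-V)
  have hdp : ∀ b ∈ Bp, (d:ℤ) = (V b - U b) + ((d:ℤ) - U b - V b) := by
    intro b hb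
    have h0 : U b = 0 := by simp [hU, (mem_filter.mp hb).2]
    linarith
  have hdm : ∀ b ∈ Bm, (d:ℤ) = -(V b - U b) + ((d:ℤ) - U b - V b) := by
    intro b hb
    have h1 : ¬ uS S b = 0 := (mem_filter.mp hb).2
    have h2 : vS S b = 0 := (hpure b).resolve_left h1
    have h0 : V b = 0 := by simp [hV, h2]
    linarith
  have hsum_p : (d:ℤ) * Bp.card = ∑ b ∈ Bp, (V b - U b) + ∑ b ∈ Bp, ((d:ℤ) - U b - V b) := by
    rw [← Finset.sum_add_distrib]
    rw [← Finset.sum_congr rfl hdp]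
    simp [mul_comm]
  have hsum_m : (d:ℤ) * Bm.card = -∑ b ∈ Bm, (V b - U b) + ∑ b ∈ Bm, ((d:ℤ) - U b - V b) := by
    rw [← Finset.sum_neg_distrib, ← Finset.sum_add_distrib]
    rw [← Finset.sum_congr rfl hdm]
    simp [mul_comm]
  -- the total deficiency bound
  have habsW : |∑ b : Fin d, (V b - U b)| ≤ ∑ b : Fin d, |R b - Q b| := by
    rw [hW]
    calc |∑ b : Fin d, (Q b - R b)| ≤ ∑ b : Fin d, |Q b - R b| :=
          Finset.abs_sum_le_sum_abs _ _
      _ = ∑ b : Fin d, |R b - Q b| := by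
          apply Finset.sum_congr rfl
          intro b _
          rw [abs_sub_comm]
  have hdeltasum : ∑ b ∈ Bp, ((d:ℤ) - U b - V b) + ∑ b ∈ Bm, ((d:ℤ) - U b - V b)
      = ∑ b : Fin d, ((d:ℤ) - U b - V b) := by
    rw [hBp, hBm]
    exact Finset.sum_filter_add_sum_filter_not _ _ _
  have hWsplit : ∑ b ∈ Bp, (V b - U b) + ∑ b ∈ Bm, (V b - U b) = ∑ b : Fin d, (V b - U b) := by
    rw [hBp, hBm]
    exact Finset.sum_filter_add_sum_filter_not _ _ _
  -- conclude  d * |np - nm| ≤ d - 2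
  have hkey : (d:ℤ) * Bp.card - (d:ℤ) * Bm.card
      = ∑ b : Fin d, (V b - U b) + (∑ b ∈ Bp, ((d:ℤ) - U b - V b) - ∑ b ∈ Bm, ((d:ℤ) - U b - V b)) := by
    rw [hsum_p, hsum_m]
    linarith [hWsplit]
  have hfar : |(d:ℤ) * Bp.card - (d:ℤ) * Bm.card| ≤ (d:ℤ) - 2 := by
    rw [hkey]
    have hdn : ∀ s : Finset (Fin d), 0 ≤ ∑ b ∈ s, ((d:ℤ) - U b - V b) :=
      fun s => Finset.sum_nonneg (fun b _ => hdelta b)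
    have h1 : |∑ b ∈ Bp, ((d:ℤ) - U b - V b) - ∑ b ∈ Bm, ((d:ℤ) - U b - V b)|
        ≤ ∑ b : Fin d, ((d:ℤ) - U b - V b) := by
      rw [abs_sub_le_iff]
      constructor <;> [linarith [hdn Bp, hdn Bm, hdeltasum]; linarith [hdn Bp, hdn Bm, hdeltasum]]
    calc |∑ b : Fin d, (V b - U b) + (∑ b ∈ Bp, ((d:ℤ) - U b - V b) - ∑ b ∈ Bm, ((d:ℤ) - U b - V b))|
        ≤ |∑ b : Fin d, (V b - U b)| + |∑ b ∈ Bp, ((d:ℤ) - U b - V b) - ∑ b ∈ Bm, ((d:ℤ) - U b - V b)| :=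
          abs_add_le _ _
      _ ≤ ∑ b : Fin d, |R b - Q b| + ∑ b : Fin d, ((d:ℤ) - U b - V b) := by
          exact add_le_add habsW h1
      _ = ∑ b : Fin d, (|R b - Q b| + ((d:ℤ) - U b - V b)) := by
          rw [← Finset.sum_add_distrib]
      _ ≤ (d:ℤ) - 2 := hslack
  -- parity contradiction
  have hne : Bp.card ≠ Bm.card := by
    intro he
    omega
  have : (d:ℤ) ≤ |(d:ℤ) * Bp.card - (d:ℤ) * Bm.card| := by
    rw [← mul_sub]
    rw [abs_mul]
    have h1 : (1:ℤ) ≤ |(Bp.card : ℤ) - Bm.card| := by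
      have h0 : ((Bp.card : ℤ) - Bm.card) ≠ 0 := by
        intro h
        apply hne
        omega
      have h2 : 0 < |(Bp.card : ℤ) - Bm.card| := abs_pos.mpr h0
      omega
    have hd0 : (0:ℤ) ≤ d := by positivity
    calc (d:ℤ) = |(d:ℤ)| * 1 := by rw [abs_of_nonneg hd0, mul_one]
      _ ≤ |(d:ℤ)| * |(Bp.card : ℤ) - Bm.card| := by
          apply mul_le_mul_of_nonneg_left h1 (abs_nonneg _)
  linarith

-- helper membership lemmas
lemma u_zero_mem {S : Finset (T d)} {β : Fin d} (h : uS S β = 0) (a : Fin d) : β ∈ Qs S a := by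
  by_contra hmem
  have : a ∈ univ.filter (fun a => β ∉ Qs S a) := mem_filter.mpr ⟨mem_univ _, hmem⟩
  rw [uS, card_eq_zero] at h
  rw [h] at this
  exact notMem_empty _ this

lemma u_full_not_mem {S : Finset (T d)} {β : Fin d} (h : uS S β = d) (a : Fin d) :
    β ∉ Qs S a := by
  have huniv : univ.filter (fun a => β ∉ Qs S a) = univ := by
    apply Finset.eq_univ_of_card
    rw [← uS, h]
    simp
  have : a ∈ univ.filter (fun a => β ∉ Qs S a) := by rw [huniv]; exact mem_univ _
  exact (mem_filter.mp this).2

lemma v_zero_mem {S : Finset (T d)} {β : Fin d} (h : vS S β = 0) (c : Fin d) : β ∈ Ps S c := by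
  by_contra hmem
  have : c ∈ univ.filter (fun c => β ∉ Ps S c) := mem_filter.mpr ⟨mem_univ _, hmem⟩
  rw [vS, card_eq_zero] at h
  rw [h] at this
  exact notMem_empty _ this

lemma v_full_not_mem {S : Finset (T d)} {β : Fin d} (h : vS S β = d) (c : Fin d) :
    β ∉ Ps S c := by
  have huniv : univ.filter (fun c => β ∉ Ps S c) = univ := by
    apply Finset.eq_univ_of_card
    rw [← vS, h]
    simp
  have : c ∈ univ.filter (fun c => β ∉ Ps S c) := by rw [huniv]; exact mem_univ _
  exact (mem_filter.mp this).2

-- Part 6 : endgame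
lemma endgame (S : Finset (T d)) (hDom : Dom S) (hd : 3 ≤ d) (hodd : d % 2 = 1)
    (hsmall : ∑ b : Fin d, slk S b ≤ (d : ℤ) - 2)
    (b₀ : Fin d) (hu1 : uS S b₀ = 1) (hv1 : 1 ≤ vS S b₀) : False := by
  classical
  have hd2 : 2 ≤ d := by omega
  -- slack at b₀
  have hU1 : (uS S b₀ : ℤ) = 1 := by rw [hu1]; rfl
  have hb0 : ((d : ℤ) - 2) + |(((Ps S b₀).card : ℤ) - (Qs S b₀).card) - (1 - (vS S b₀ : ℤ))|
      ≤ slk S b₀ := by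
    have := mixed_slack S hDom b₀
    rw [hU1] at this
    simpa using this
  -- all other slacks are zero, and the abs term at b₀ vanishes
  have hsum_erase : ∑ β ∈ univ.erase b₀, slk S β = (∑ b : Fin d, slk S b) - slk S b₀ := by
    rw [← Finset.sum_erase_add univ _ (mem_univ b₀)]
    ring
  have herase_nonneg : 0 ≤ ∑ β ∈ univ.erase b₀, slk S β :=
    Finset.sum_nonneg (fun β _ => slk_nonneg S hDom hd2 β)
  have habs0 : (((Ps S b₀).card : ℤ) - (Qs S b₀).card) = (1 - (vS S b₀ : ℤ)) := by
    have h1 : slk S b₀ ≤ (d:ℤ) - 2 := by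
      have := hsum_erase
      linarith [hsmall, herase_nonneg]
    have h2 : |(((Ps S b₀).card : ℤ) - (Qs S b₀).card) - (1 - (vS S b₀ : ℤ))| ≤ 0 := by
      linarith
    have h3 := abs_nonpos_iff.mp h2
    linarith
  have hzero : ∀ β, β ≠ b₀ → slk S β = 0 := by
    intro β hne
    have hmem : β ∈ univ.erase b₀ := mem_erase.mpr ⟨hne, mem_univ _⟩
    have hle : slk S β ≤ ∑ β ∈ univ.erase b₀, slk S β :=
      Finset.single_le_sum (fun i _ => slk_nonneg S hDom hd2 i) hmem
    have hup : ∑ β ∈ univ.erase b₀, slk S β ≤ 0 := by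
      rw [hsum_erase]
      linarith [hb0, hsmall, abs_nonneg ((((Ps S b₀).card : ℤ) - (Qs S b₀).card) - (1 - (vS S b₀ : ℤ)))]
    have := slk_nonneg S hDom hd2 β
    linarith
  -- structure of other blocks
  have hstruct : ∀ β, β ≠ b₀ → ((uS S β = 0 ∧ vS S β = d) ∨ (uS S β = d ∧ vS S β = 0)) := by
    intro β hne
    have hz := hzero β hne
    have hpure : uS S β = 0 ∨ vS S β = 0 := by
      by_contra hcon
      push_neg at hcon
      have hu : (1:ℤ) ≤ (uS S β : ℤ) := by
        have := Nat.one_le_iff_ne_zero.mpr hcon.1; exact_mod_cast this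
      have hv : (1:ℤ) ≤ (vS S β : ℤ) := by
        have := Nat.one_le_iff_ne_zero.mpr hcon.2; exact_mod_cast this
      have := mixed_slack S hDom β
      have habs : (0:ℤ) ≤ |(((Ps S β).card : ℤ) - (Qs S β).card) - ((uS S β : ℤ) - vS S β)| :=
        abs_nonneg _
      have hd' : (3:ℤ) ≤ d := by exact_mod_cast hd
      nlinarith
    have hps := pure_slack S β hpure
    rw [hz] at hps
    have habs : (0:ℤ) ≤ |((Ps S β).card : ℤ) - (Qs S β).card| := abs_nonneg _
    have hu' : (uS S β : ℤ) ≤ d := by exact_mod_cast u_le_d S β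
    have hv' : (vS S β : ℤ) ≤ d := by exact_mod_cast v_le_d S β
    have hsum : (uS S β : ℤ) + vS S β = d := by
      rcases hpure with h | h
      · have h0 : (uS S β : ℤ) = 0 := by rw [h]; rfl
        linarith
      · have h0 : (vS S β : ℤ) = 0 := by rw [h]; rfl
        linarith
    rcases hpure with h | h
    · left
      refine ⟨h, ?_⟩
      have h0 : (uS S β : ℤ) = 0 := by rw [h]; rfl
      have : (vS S β : ℤ) = d := by linarith
      exact_mod_cast this
    · right
      refine ⟨?_, h⟩
      have h0 : (vS S β : ℤ) = 0 := by rw [h]; rfl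
      have : (uS S β : ℤ) = d := by linarith
      exact_mod_cast this
  -- R β = Q β for β ≠ b₀
  have hRQ : ∀ β, β ≠ b₀ → (Ps S β).card = (Qs S β).card := by
    intro β hne
    have hz := hzero β hne
    have hpure : uS S β = 0 ∨ vS S β = 0 := by
      rcases hstruct β hne with ⟨h, _⟩ | ⟨_, h⟩
      · exact Or.inl h
      · exact Or.inr h
    have hps := pure_slack S β hpure
    rw [hz] at hps
    have hsum : (uS S β : ℤ) + vS S β = d := by
      rcases hstruct β hne with ⟨h1, h2⟩ | ⟨h1, h2⟩ <;> rw [h1, h2] <;> push_cast <;> ring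
    have habs : |((Ps S β).card : ℤ) - (Qs S β).card| ≤ 0 := by linarith
    have := abs_nonpos_iff.mp habs
    have : ((Ps S β).card : ℤ) = (Qs S β).card := by linarith
    exact_mod_cast this
  -- the unique a*
  obtain ⟨astar, hastar⟩ := Finset.card_eq_one.mp hu1
  have ha1 : b₀ ∉ Qs S astar := by
    have : astar ∈ univ.filter (fun a => b₀ ∉ Qs S a) := by
      rw [hastar]; exact mem_singleton_self _
    exact (mem_filter.mp this).2
  have ha2 : ∀ a, b₀ ∉ Qs S a → a = astar := by
    intro a ha
    have : a ∈ univ.filter (fun a => b₀ ∉ Qs S a) := mem_filter.mpr ⟨mem_univ _, ha⟩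
    rw [hastar] at this
    exact mem_singleton.mp this
  -- membership characterizations
  have hQmem : ∀ a z, z ∈ Qs S a → z ≠ b₀ → uS S z = 0 := by
    intro a z hz hne
    rcases hstruct z hne with ⟨h, _⟩ | ⟨h, _⟩
    · exact h
    · exact absurd hz (u_full_not_mem h a)
  have hPmem : ∀ c z, z ∈ Ps S c → z ≠ b₀ → uS S z = d := by
    intro c z hz hne
    rcases hstruct z hne with ⟨_, h⟩ | ⟨h, _⟩
    · exact absurd hz (v_full_not_mem h c)
    · exact h
  -- card computations : (Qs S a).erase b₀ = Bp'
  set Bp' := (univ.erase b₀).filter (fun β => uS S β = 0) with hBp'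
  set Bm' := (univ.erase b₀).filter (fun β => ¬ uS S β = 0) with hBm'
  have hQerase : ∀ a, (Qs S a).erase b₀ = Bp' := by
    intro a
    ext z
    constructor
    · intro hz
      have h1 := Finset.mem_erase.mp hz
      exact Finset.mem_filter.mpr ⟨Finset.mem_erase.mpr ⟨h1.1, mem_univ z⟩, hQmem a z h1.2 h1.1⟩
    · intro hz
      have h1 := Finset.mem_filter.mp hz
      have hne := (Finset.mem_erase.mp h1.1).1
      exact Finset.mem_erase.mpr ⟨hne, u_zero_mem h1.2 a⟩
  have hPerase : ∀ c, (Ps S c).erase b₀ = Bm' := by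
    intro c
    ext z
    constructor
    · intro hz
      have h1 := Finset.mem_erase.mp hz
      refine Finset.mem_filter.mpr ⟨Finset.mem_erase.mpr ⟨h1.1, mem_univ z⟩, ?_⟩
      rw [hPmem c z h1.2 h1.1]
      omega
    · intro hz
      have h1 := Finset.mem_filter.mp hz
      have hne := (Finset.mem_erase.mp h1.1).1
      refine Finset.mem_erase.mpr ⟨hne, ?_⟩
      rcases hstruct z hne with ⟨h, _⟩ | ⟨_, h⟩
      · exact absurd h h1.2
      · exact v_zero_mem h c
  -- card formulas
  have hQcard : ∀ a, (Qs S a).card = Bp'.card + (if b₀ ∈ Qs S a then 1 else 0) := by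
    intro a
    by_cases hb : b₀ ∈ Qs S a
    · rw [if_pos hb, ← hQerase a]
      rw [Finset.card_erase_of_mem hb]
      have hpos : 1 ≤ (Qs S a).card := card_pos.mpr ⟨b₀, hb⟩
      omega
    · rw [if_neg hb, ← hQerase a, Finset.erase_eq_of_notMem hb]
      omega
  have hPcard : ∀ c, (Ps S c).card = Bm'.card + (if b₀ ∈ Ps S c then 1 else 0) := by
    intro c
    by_cases hb : b₀ ∈ Ps S c
    · rw [if_pos hb, ← hPerase c]
      rw [Finset.card_erase_of_mem hb]
      have hpos : 1 ≤ (Ps S c).card := card_pos.mpr ⟨b₀, hb⟩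
      omega
    · rw [if_neg hb, ← hPerase c, Finset.erase_eq_of_notMem hb]
      omega
  -- balance : Bp'.card = Bm'.card
  have hW : ∑ b : Fin d, ((vS S b : ℤ) - uS S b) = ∑ b : Fin d, (((Qs S b).card : ℤ) - (Ps S b).card) := by
    have e1 : ∑ b : Fin d, ((Qs S b).card : ℤ) + ∑ b : Fin d, (uS S b : ℤ) = (d:ℤ) * d := by
      rw [← Nat.cast_sum, ← Nat.cast_sum]
      exact_mod_cast sum_su S
    have e2 : ∑ b : Fin d, ((Ps S b).card : ℤ) + ∑ b : Fin d, (vS S b : ℤ) = (d:ℤ) * d := by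
      rw [← Nat.cast_sum, ← Nat.cast_sum]
      exact_mod_cast sum_rv S
    rw [Finset.sum_sub_distrib, Finset.sum_sub_distrib]
    linarith
  have hsumL : ∑ b : Fin d, ((vS S b : ℤ) - uS S b)
      = ((d:ℤ) * Bp'.card - (d:ℤ) * Bm'.card) + ((vS S b₀ : ℤ) - 1) := by
    rw [← Finset.sum_erase_add univ _ (mem_univ b₀), hU1]
    have hsplit2 : ∑ β ∈ univ.erase b₀, ((vS S β : ℤ) - uS S β)
        = ∑ β ∈ Bp', ((vS S β : ℤ) - uS S β) + ∑ β ∈ Bm', ((vS S β : ℤ) - uS S β) := by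
      rw [hBp', hBm']
      exact (Finset.sum_filter_add_sum_filter_not _ _ _).symm
    have hvp : ∑ β ∈ Bp', ((vS S β : ℤ) - uS S β) = (d:ℤ) * Bp'.card := by
      rw [Finset.sum_congr rfl (g := fun _ => (d:ℤ)) ?_]
      · rw [Finset.sum_const, nsmul_eq_mul, mul_comm]
      · intro β hβ
        rw [hBp', mem_filter, mem_erase] at hβ
        rcases hstruct β hβ.1.1 with ⟨h1, h2⟩ | ⟨h1, _⟩
        · rw [h1, h2]; push_cast; ring
        · exact absurd h1 (by rw [hβ.2]; omega)
    have hvm : ∑ β ∈ Bm', ((vS S β : ℤ) - uS S β) = -((d:ℤ) * Bm'.card) := by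
      rw [Finset.sum_congr rfl (g := fun _ => -(d:ℤ)) ?_]
      · rw [Finset.sum_const, nsmul_eq_mul, mul_comm]; ring
      · intro β hβ
        rw [hBm', mem_filter, mem_erase] at hβ
        rcases hstruct β hβ.1.1 with ⟨h1, _⟩ | ⟨h1, h2⟩
        · exact absurd h1 hβ.2
        · rw [h1, h2]; push_cast; ring
    rw [hsplit2, hvp, hvm]
    ring
  have hsumR : ∑ b : Fin d, (((Qs S b).card : ℤ) - (Ps S b).card) = ((vS S b₀ : ℤ) - 1) := by
    rw [← Finset.sum_erase_add univ _ (mem_univ b₀)]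
    have h0 : ∑ β ∈ univ.erase b₀, (((Qs S β).card : ℤ) - (Ps S β).card) = 0 := by
      apply Finset.sum_eq_zero
      intro β hβ
      rw [hRQ β (mem_erase.mp hβ).1]
      ring
    rw [h0, zero_add]
    linarith [habs0]
  have hnn : Bp'.card = Bm'.card := by
    have : (d:ℤ) * Bp'.card - (d:ℤ) * Bm'.card = 0 := by
      rw [hW] at hsumL
      linarith [hsumR]
    have hd0 : (d:ℤ) ≠ 0 := by
      have : (3:ℤ) ≤ d := by exact_mod_cast hd
      linarith
    have h2 : (d:ℤ) * (Bp'.card : ℤ) = (d:ℤ) * (Bm'.card : ℤ) := by linarith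
    have := mul_left_cancel₀ hd0 h2
    exact_mod_cast this
  -- key equivalence for β ≠ b₀
  have hkey9 : ∀ β, β ≠ b₀ → (b₀ ∈ Ps S β ↔ β ≠ astar) := by
    intro β hne
    have hQc := hQcard β
    have hPc := hPcard β
    have hRQβ := hRQ β hne
    have hiff : (b₀ ∈ Ps S β) ↔ (b₀ ∈ Qs S β) := by
      by_cases h1 : b₀ ∈ Ps S β <;> by_cases h2 : b₀ ∈ Qs S β <;>
        simp [h1, h2] at hQc hPc ⊢ <;> omega
    rw [hiff]
    constructor
    · intro h he
      rw [he] at h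
      exact ha1 h
    · intro h
      by_contra hcon
      exact h (ha2 β hcon)
  by_cases hcase : astar = b₀
  · -- astar = b₀
    have hb₀P : b₀ ∉ Ps S b₀ := by
      have hvpos : 0 < vS S b₀ := hv1
      rw [vS, card_pos] at hvpos
      obtain ⟨c, hc⟩ := hvpos
      have hcnot : b₀ ∉ Ps S c := (mem_filter.mp hc).2
      by_cases hcb : c = b₀
      · rwa [hcb] at hcnot
      · exfalso
        exact hcnot ((hkey9 c hcb).mpr (by rw [hcase]; exact hcb))
    rcases hDom b₀ b₀ b₀ with h | h | h
    · exact ha1 (by rwa [hcase])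
    · exact hb₀P h
    · exact hb₀P (mem_Ps.mpr ⟨b₀, h⟩)
  · -- astar ≠ b₀
    have hnP : b₀ ∉ Ps S astar := by
      intro h
      exact ((hkey9 astar hcase).mp h) rfl
    rcases hDom astar b₀ astar with h | h | h
    · exact ha1 h
    · exact hnP h
    · have haQ : astar ∈ Qs S b₀ := mem_Qs.mpr ⟨astar, h⟩
      have haP : astar ∈ Ps S b₀ := mem_Ps.mpr ⟨astar, h⟩
      have h10 : uS S astar = 0 := hQmem b₀ astar haQ hcase
      have h11 : uS S astar = d := hPmem b₀ astar haP hcase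
      omega

-- Part 7
lemma slk_rev (S : Finset (T d)) (b : Fin d) : slk (rev S) b = slk S b := by
  unfold slk
  rw [fib_rev_card, Ps_rev, Qs_rev, uS_rev, vS_rev]
  ring

theorem lower_bound (hd : 2 ≤ d) (S : Finset (T d)) (hDom : Dom S) :
    d * ((d + 1) / 2) ≤ S.card := by
  classical
  have hbase : (d : ℤ) * d ≤ 2 * S.card := by
    have h1 : 0 ≤ ∑ b : Fin d, slk S b :=
      Finset.sum_nonneg (fun b _ => slk_nonneg S hDom hd b)
    rw [sum_slk S] at h1
    linarith
  rcases Nat.even_or_odd d with he | ho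
  · -- even case
    obtain ⟨k, hk⟩ := he
    have hdk : d = 2 * k := by omega
    have e1 : d * ((d + 1) / 2) = 2 * (k * k) := by
      subst hdk
      have h2 : (2 * k + 1) / 2 = k := by omega
      rw [h2]; ring
    have e2 : (d : ℤ) * d = 4 * ((k : ℤ) * k) := by
      have : (d : ℤ) = 2 * k := by exact_mod_cast hdk
      rw [this]; ring
    rw [e1]
    have hbase2 : 4 * ((k : ℤ) * k) ≤ 2 * S.card := by rw [← e2]; exact hbase
    have : (2 : ℤ) * ((k : ℤ) * k) ≤ S.card := by linarith
    exact_mod_cast this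
  · -- odd case
    obtain ⟨k, hk⟩ := ho
    have hd3 : 3 ≤ d := by omega
    have hodd : d % 2 = 1 := by omega
    have hhalf : (d + 1) / 2 = k + 1 := by omega
    rw [hhalf]
    by_contra hcon
    push_neg at hcon
    have hcard : (S.card : ℤ) ≤ (d : ℤ) * (k + 1) - 1 := by
      have : S.card + 1 ≤ d * (k + 1) := hcon
      have := (Nat.cast_le (α := ℤ)).mpr this
      push_cast at this
      linarith
    have hsmall : ∑ b : Fin d, slk S b ≤ (d : ℤ) - 2 := by
      rw [sum_slk S]
      have hd' : (d : ℤ) = 2 * k + 1 := by exact_mod_cast hk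
      nlinarith [hcard]
    by_cases hmix : ∃ b : Fin d, 1 ≤ uS S b ∧ 1 ≤ vS S b
    · obtain ⟨b₁, hu, hv⟩ := hmix
      have hslkb : slk S b₁ ≤ (d : ℤ) - 2 := by
        have hle : slk S b₁ ≤ ∑ b : Fin d, slk S b :=
          Finset.single_le_sum (fun i _ => slk_nonneg S hDom hd i) (mem_univ b₁)
        linarith
      have hprod : ((uS S b₁ : ℤ) - 1) * ((vS S b₁ : ℤ) - 1) = 0 := by
        have hms := mixed_slack S hDom b₁
        have habs : (0:ℤ) ≤ |(((Ps S b₁).card : ℤ) - (Qs S b₁).card) - ((uS S b₁ : ℤ) - vS S b₁)| :=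
          abs_nonneg _
        have hu' : (1:ℤ) ≤ (uS S b₁ : ℤ) := by exact_mod_cast hu
        have hv' : (1:ℤ) ≤ (vS S b₁ : ℤ) := by exact_mod_cast hv
        nlinarith
      have hor : uS S b₁ = 1 ∨ vS S b₁ = 1 := by
        rcases mul_eq_zero.mp hprod with h | h
        · left
          have : (uS S b₁ : ℤ) = 1 := by linarith
          exact_mod_cast this
        · right
          have : (vS S b₁ : ℤ) = 1 := by linarith
          exact_mod_cast this
      rcases hor with h1 | h1
      · exact absurd (endgame S hDom hd3 hodd hsmall b₁ h1 hv) (fun h => h)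
      · -- use reversal
        apply endgame (rev S) (Dom_rev hDom) hd3 hodd ?_ b₁ ?_ ?_
        · rw [Finset.sum_congr rfl (fun b _ => slk_rev S b)]
          exact hsmall
        · rw [uS_rev]; exact h1
        · rw [vS_rev]; exact hu
    · push_neg at hmix
      have hpure : ∀ b : Fin d, uS S b = 0 ∨ vS S b = 0 := by
        intro b
        by_cases h : uS S b = 0
        · exact Or.inl h
        · have := hmix b (Nat.one_le_iff_ne_zero.mpr h)
          right
          omega
      exact absurd (odd_pure S hDom hd hodd hpure hsmall) (fun h => h)

-- Part 8 : construction
theorem upper_bound (hd : 2 ≤ d) :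
    ∃ S : Finset (T d), S.card = d * ((d + 1) / 2) ∧ Dom S := by
  classical
  set mh := (d + 1) / 2 with hmh
  have hmh_le : mh ≤ d := by omega
  have hpos : 0 < d - mh := by omega
  have h2mh : d ≤ 2 * mh := by omega
  have hdpos : 0 < d := by omega
  let f : Fin d × Fin mh → T d := fun p =>
    (⟨mh + p.2.val % (d - mh), by
        have := Nat.mod_lt p.2.val hpos
        omega⟩,
     p.1,
     ⟨p.2.val, lt_of_lt_of_le p.2.isLt hmh_le⟩)
  have hinj : Function.Injective f := by
    rintro ⟨q, i⟩ ⟨q', i'⟩ h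
    simp only [f, Prod.ext_iff, Fin.ext_iff] at h
    obtain ⟨h1, h2, h3⟩ := h
    exact Prod.ext (Fin.ext h2) (Fin.ext h3)
  refine ⟨(univ : Finset (Fin d × Fin mh)).image f, ?_, ?_⟩
  · rw [Finset.card_image_of_injective _ hinj, card_univ]
    simp [mul_comm]
  · intro a b c
    by_cases hb : b.val < mh
    · left
      rw [mem_Qs]
      refine ⟨(f (a, ⟨b.val, hb⟩)).1, ?_⟩
      have hmem := Finset.mem_image_of_mem f (mem_univ (a, (⟨b.val, hb⟩ : Fin mh)))
      have he : f (a, ⟨b.val, hb⟩) = ((f (a, ⟨b.val, hb⟩)).1, a, b) := by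
        exact Prod.ext_iff.mpr ⟨rfl, Prod.ext_iff.mpr ⟨rfl, Fin.ext rfl⟩⟩
      rwa [he] at hmem
    · right; left
      rw [mem_Ps]
      have hbv : mh ≤ b.val := le_of_not_gt hb
      have hr1 : b.val - mh < mh := by
        have := b.isLt
        omega
      refine ⟨(f (c, ⟨b.val - mh, hr1⟩)).2.2, ?_⟩
      have hmem := Finset.mem_image_of_mem f (mem_univ (c, (⟨b.val - mh, hr1⟩ : Fin mh)))
      have he : f (c, ⟨b.val - mh, hr1⟩) = (b, c, (f (c, ⟨b.val - mh, hr1⟩)).2.2) := by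
        refine Prod.ext_iff.mpr ⟨?_, rfl⟩
        refine Fin.ext ?_
        have hlt : b.val - mh < d - mh := by
          have := b.isLt
          omega
        have hr2 : (b.val - mh) % (d - mh) = b.val - mh := Nat.mod_eq_of_lt hlt
        simp only [f, hr2]
        omega
      rwa [he] at hmem

end DB3

namespace DB3Glue
open DB3
variable {d : ℕ}

def toT (v : dbVtx d 1 3) : T d := (v.1 0, v.1 1, v.1 2)

def ofT (t : T d) : dbVtx d 1 3 :=
  ⟨![t.1, t.2.1, t.2.2], by
    intro i j hij _
    have : (i : ℕ) < (j : ℕ) := hij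
    omega⟩

lemma ofT_toT (v : dbVtx d 1 3) : ofT (toT v) = v := by
  apply Subtype.ext
  funext i
  fin_cases i <;> rfl

lemma toT_ofT (t : T d) : toT (ofT t) = t := rfl

lemma toT_inj : Function.Injective (toT (d := d)) := by
  intro a b h
  have := congrArg ofT h
  rwa [ofT_toT, ofT_toT] at this

lemma ofT_inj : Function.Injective (ofT (d := d)) := by
  intro a b h
  have := congrArg toT h
  rwa [toT_ofT, toT_ofT] at this

lemma shift_iff {x y : dbVtx d 1 3} :
    dbShift x y ↔ (y.1 0 = x.1 1 ∧ y.1 1 = x.1 2) := by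
  constructor
  · intro h
    refine ⟨?_, ?_⟩
    · have := h 0 (by norm_num)
      simpa using this
    · have := h 1 (by norm_num)
      convert this using 2
      rfl
  · rintro ⟨h0, h1⟩
    intro i hi
    fin_cases i
    · simpa using h0
    · convert h1 using 2 <;> rfl
    · simp at hi

lemma dom_transfer (Sset : Set (dbVtx d 1 3)) (hfin : Sset.Finite)
    (hdom : dbUndirDominating Sset) : Dom (hfin.toFinset.image toT) := by
  intro a b c
  set F := hfin.toFinset.image toT with hF
  obtain ⟨s, hs, hcase⟩ := hdom (ofT (a, b, c))
  have hsF : toT s ∈ F := mem_image_of_mem _ (hfin.mem_toFinset.mpr hs)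
  rcases hcase with heq | ⟨hne, hsh | hsh⟩
  · right; right
    have : toT s = (a, b, c) := by rw [heq]; rfl
    rwa [this] at hsF
  · -- dbShift s (ofT (a,b,c)) : first two coords of target = last two of s
    rw [shift_iff] at hsh
    obtain ⟨h0, h1⟩ := hsh
    left
    rw [mem_Qs]
    refine ⟨s.1 0, ?_⟩
    have he : toT s = (s.1 0, a, b) := by
      have e0 : (ofT (a,b,c)).1 0 = a := rfl
      have e1 : (ofT (a,b,c)).1 1 = b := rfl
      rw [toT]
      rw [← h0, ← h1, e0, e1]
    rwa [he] at hsF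
  · rw [shift_iff] at hsh
    obtain ⟨h0, h1⟩ := hsh
    right; left
    rw [mem_Ps]
    refine ⟨s.1 2, ?_⟩
    have he : toT s = (b, c, s.1 2) := by
      have e1 : (ofT (a,b,c)).1 1 = b := rfl
      have e2 : (ofT (a,b,c)).1 2 = c := rfl
      rw [toT]
      rw [h0, h1, e1, e2]
    rwa [he] at hsF

lemma dom_transfer' (F : Finset (T d)) (hDom : Dom F) :
    dbUndirDominating ((F.image ofT : Finset (dbVtx d 1 3)) : Set (dbVtx d 1 3)) := by
  intro v
  rcases hDom (v.1 0) (v.1 1) (v.1 2) with h | h | h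
  · obtain ⟨x, hx⟩ := mem_Qs.mp h
    refine ⟨ofT (x, v.1 0, v.1 1), by simpa using mem_image_of_mem ofT hx, ?_⟩
    by_cases heq : ofT (x, v.1 0, v.1 1) = v
    · exact Or.inl heq
    · refine Or.inr ⟨heq, Or.inl ?_⟩
      rw [shift_iff]
      exact ⟨rfl, rfl⟩
  · obtain ⟨z, hz⟩ := mem_Ps.mp h
    refine ⟨ofT (v.1 1, v.1 2, z), by simpa using mem_image_of_mem ofT hz, ?_⟩
    by_cases heq : ofT (v.1 1, v.1 2, z) = v
    · exact Or.inl heq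
    · refine Or.inr ⟨heq, Or.inr ?_⟩
      rw [shift_iff]
      exact ⟨rfl, rfl⟩
  · refine ⟨ofT (v.1 0, v.1 1, v.1 2), by simpa using mem_image_of_mem ofT h, Or.inl ?_⟩
    have : (v.1 0, v.1 1, v.1 2) = toT v := rfl
    rw [this, ofT_toT]

lemma ceil_half (d : ℕ) : ⌈(d : ℚ) / 2⌉₊ = (d + 1) / 2 := by
  rcases Nat.even_or_odd d with ⟨k, hk⟩ | ⟨k, hk⟩
  · subst hk
    have h1 : ((k + k : ℕ) : ℚ) / 2 = (k : ℚ) := by push_cast; ring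
    rw [h1, Nat.ceil_natCast]
    omega
  · subst hk
    have h2 : (2 * k + 1 + 1) / 2 = k + 1 := by omega
    rw [h2]
    rw [Nat.ceil_eq_iff (by omega)]
    constructor
    · push_cast
      nlinarith
    · push_cast
      nlinarith
end DB3Glue

/-- `γ(cDB(d,1,3)) = d * ⌈d/2⌉`. -/
theorem gammaUndir_deBruijn_three (d : ℕ) (hd : 2 ≤ d) :
    gammaUndir d 1 3 = d * ⌈(d : ℚ) / 2⌉₊ := by
  classical
  rw [DB3Glue.ceil_half]
  set K := {k | ∃ S : Set (dbVtx d 1 3), S.Finite ∧ S.ncard = k ∧ dbUndirDominating S} with hK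
  have hmem : d * ((d + 1) / 2) ∈ K := by
    obtain ⟨F, hcard, hDom⟩ := DB3.upper_bound hd
    refine ⟨((F.image DB3Glue.ofT : Finset (dbVtx d 1 3)) : Set (dbVtx d 1 3)),
      Finset.finite_toSet _, ?_, DB3Glue.dom_transfer' F hDom⟩
    rw [Set.ncard_coe_finset, Finset.card_image_of_injective _ DB3Glue.ofT_inj, hcard]
  have hlb : ∀ k ∈ K, d * ((d + 1) / 2) ≤ k := by
    rintro k ⟨Sset, hfin, hncard, hdom⟩
    have hDomF := DB3Glue.dom_transfer Sset hfin hdom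
    have := DB3.lower_bound hd _ hDomF
    calc d * ((d + 1) / 2) ≤ (hfin.toFinset.image DB3Glue.toT).card := this
      _ = hfin.toFinset.card := Finset.card_image_of_injective _ DB3Glue.toT_inj
      _ = Sset.ncard := (Set.ncard_eq_toFinset_card Sset hfin).symm
      _ = k := hncard
  exact le_antisymm (Nat.sInf_le hmem) (le_csInf ⟨_, hmem⟩ hlb)
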